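/- arXiv:1305.1144 — 2 statements merged into one kernel-verified Lean document; each statement's English description precedes it below -/
import Mathlib

section
/- Let 1 ≤ k ≤ m ≤ n, let P ∈ L(V) be positive semidefinite with an orthonormal basis of eigenvectors e_1, …, e_n and corresponding eigenvalues ν_1 ≥ ⋯ ≥ ν_n, and let α ∈ Γ_{m,n}. Then D^k K_χ(P)(I, …, I) applied to e*_α := K_χ(e_{α(1)}⊗⋯⊗e_{α(m)}) equals k! · p_{m−k}(ν_α) · e*_α; in particular, whenever e*_α ≠ 0, it is an eigenvector of D^k K_χ(P)(I, …, I) with eigenvalue λ(α) := k! · p_{m−k}(ν_α). -/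
set_option synthInstance.maxHeartbeats 1000000
set_option maxHeartbeats 1000000

noncomputable section

/-- `V = ℂⁿ` with the standard inner product. -/
abbrev Vec (n : ℕ) : Type := EuclideanSpace ℂ (Fin n)

/-- `L(V)`, the space of linear operators on `V`, with the operator norm. -/
abbrev Op (n : ℕ) : Type := Vec n →L[ℂ] Vec n

/-- Coordinate model of the `m`-th tensor power `⊗^m V` of `V = ℂⁿ`:
functions on multi-indices `Γ_{m,n}`, with the inner product making the pure tensors of
orthonormal vectors orthonormal. -/
abbrev TVec (n m : ℕ) : Type := EuclideanSpace ℂ (Fin m → Fin n)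

abbrev TOp (n m : ℕ) : Type := TVec n m →L[ℂ] TVec n m

/-- The `(a,b)` matrix entry of an operator on `ℂⁿ` in the standard basis. -/
def entry {n : ℕ} (S : Op n) (a b : Fin n) : ℂ := S (EuclideanSpace.single b 1) a

/-- The tensor product `T 0 ⊗ T 1 ⊗ ⋯ ⊗ T (m-1)` of a family of operators,
acting on `⊗^m V` (coordinate model). -/
def tensorFam {n m : ℕ} (T : Fin m → Op n) : TOp n m :=
  Matrix.toEuclideanCLM (𝕜 := ℂ)
    (Matrix.of fun α β : Fin m → Fin n => ∏ i, entry (T i) (α i) (β i))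

/-- The `m`-th tensor power `⊗^m T` of the operator `T`. -/
def tensorPow (n m : ℕ) (T : Op n) : TOp n m := tensorFam fun _ => T

/-- The symmetrized tensor product `X^1 ⊗̃ ⋯ ⊗̃ X^m = (1/m!) ∑_σ X^{σ(1)} ⊗ ⋯ ⊗ X^{σ(m)}`. -/
def symTensor {n m : ℕ} (X : Fin m → Op n) : TOp n m :=
  ((m.factorial : ℂ))⁻¹ • ∑ σ : Equiv.Perm (Fin m), tensorFam (X ∘ σ)

/-- The permutation operator `P(σ)` on `⊗^m V`, `P(σ)(v_1 ⊗ ⋯ ⊗ v_m) = v_{σ⁻¹(1)} ⊗ ⋯ ⊗ v_{σ⁻¹(m)}`. -/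
def permOp (n m : ℕ) (σ : Equiv.Perm (Fin m)) : TOp n m :=
  Matrix.toEuclideanCLM (𝕜 := ℂ)
    (Matrix.of fun α β : Fin m → Fin n => if β = α ∘ σ then 1 else 0)

/-- The symmetrizer `K_χ = (χ(id)/m!) ∑_σ χ(σ) P(σ)` associated with a character `χ` of `S_m`. -/
def Kproj (n m : ℕ) (χ : Equiv.Perm (Fin m) → ℂ) : TOp n m :=
  (χ 1 / (m.factorial : ℂ)) • ∑ σ : Equiv.Perm (Fin m), χ σ • permOp n m σ

/-- The symmetry class of tensors `V_χ`, the range of `K_χ`. -/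
def symClass (n m : ℕ) (χ : Equiv.Perm (Fin m) → ℂ) : Submodule ℂ (TVec n m) :=
  LinearMap.range (Kproj n m χ : TVec n m →ₗ[ℂ] TVec n m)

/-- `K_χ(T)`, the restriction of `⊗^m T` to the invariant subspace `V_χ`,
realized as `Q* ∘ (⊗^m T) ∘ Q` where `Q : V_χ → ⊗^m V` is the inclusion. -/
def Kmap (n m : ℕ) (χ : Equiv.Perm (Fin m) → ℂ) (T : Op n) :
    symClass n m χ →L[ℂ] symClass n m χ :=
  (Submodule.orthogonalProjectionOnto (symClass n m χ)).comp
    ((tensorPow n m T).comp (symClass n m χ).subtypeL)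

/-- `X^1 ∗ ⋯ ∗ X^m`, the restriction of `X^1 ⊗̃ ⋯ ⊗̃ X^m` to the invariant subspace `V_χ`. -/
def starProd (n m : ℕ) (χ : Equiv.Perm (Fin m) → ℂ) (X : Fin m → Op n) :
    symClass n m χ →L[ℂ] symClass n m χ :=
  (Submodule.orthogonalProjectionOnto (symClass n m χ)).comp
    ((symTensor X).comp (symClass n m χ).subtypeL)

/-- `χ` is the character of an irreducible complex representation of `S_m`. -/
def IsIrreducibleCharacter (m : ℕ) (χ : Equiv.Perm (Fin m) → ℂ) : Prop :=
  ∃ (d : ℕ) (ρ : Representation ℂ (Equiv.Perm (Fin m)) (Fin d → ℂ)),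
    0 < d ∧
    (∀ p : Submodule ℂ (Fin d → ℂ), (∀ g x, x ∈ p → ρ g x ∈ p) → p = ⊥ ∨ p = ⊤) ∧
    ∀ g, χ g = LinearMap.trace ℂ (Fin d → ℂ) (ρ g)

/-- `T` has singular values `ν 0 ≥ ν 1 ≥ ⋯ ≥ ν (n-1)` (singular value decomposition). -/
def HasSingularValues {n : ℕ} (T : Op n) (ν : Fin n → ℝ) : Prop :=
  (∀ i, 0 ≤ ν i) ∧ Antitone ν ∧
    ∃ e f : OrthonormalBasis (Fin n) ℂ (Vec n), ∀ i, T (e i) = (ν i : ℂ) • f i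

/-- `p_t`, the elementary symmetric polynomial of degree `t` in `m` variables. -/
def esymm {R : Type*} [CommSemiring R] (m t : ℕ) (x : Fin m → R) : R :=
  ∑ s ∈ Finset.powersetCard t Finset.univ, ∏ i ∈ s, x i

/-- `multFun α i = |α⁻¹(i)|`, the multiplicity function of `α ∈ Γ_{m,n}`, whose nonzero values,
arranged decreasingly, form the multiplicity partition `μ(α)`. -/
def multFun {m n : ℕ} (α : Fin m → Fin n) : Fin n → ℕ :=
  fun i => (Finset.univ.filter fun j => α j = i).card

/-- The (antitone) partition `π` majorizes the multiplicity list `c` (i.e. `μ ⪯ π` where `μ` is the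
decreasing rearrangement of `c`): for every `s`, the sum of any `s` values of `c` is at most
`π 0 + ⋯ + π (s-1)`. -/
def MajorizesMult {n : ℕ} (π : Fin n → ℕ) (c : Fin n → ℕ) : Prop :=
  ∀ A : Finset (Fin n),
    ∑ i ∈ A, c i ≤ ∑ j ∈ Finset.univ.filter (fun j : Fin n => (j : ℕ) < A.card), π j

/-- `w = ω(π) ∈ Γ_{m,n}`: the nondecreasing map taking each value `i` with multiplicity `π i`. -/
def IsOmega {m n : ℕ} (π : Fin n → ℕ) (w : Fin m → Fin n) : Prop :=
  Monotone w ∧ ∀ i, (Finset.univ.filter fun j => w j = i).card = π i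

/-- The condition `Ω_χ = {α : π majorizes μ(α)}`, i.e. for every `α ∈ Γ_{m,n}`,
`∑_{σ ∈ G_α} χ(σ) ≠ 0` iff `π` majorizes the multiplicity partition `μ(α)`; it holds exactly when
`π` is the partition of `m` canonically associated with the irreducible character `χ`. -/
def OmegaChiCondition {m n : ℕ} (χ : Equiv.Perm (Fin m) → ℂ) (π : Fin n → ℕ) : Prop :=
  ∀ α : Fin m → Fin n,
    (∑ σ ∈ Finset.univ.filter (fun σ : Equiv.Perm (Fin m) => α ∘ σ = α), χ σ) ≠ 0 ↔
      MajorizesMult π (multFun α)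

/-- A linear operator on a subspace `S` of `⊗^m V` is positive semidefinite
(for the inner product inherited from `⊗^m V`). -/
def IsPSDOn {n m : ℕ} (S : Submodule ℂ (TVec n m)) (A : S →L[ℂ] S) : Prop :=
  (∀ x y : S,
      (inner ℂ ((A x : TVec n m)) (y : TVec n m) : ℂ) = inner ℂ (x : TVec n m) ((A y : TVec n m))) ∧
  ∀ x : S, 0 ≤ (inner ℂ ((A x : TVec n m)) (x : TVec n m) : ℂ).re

/-- `⊗^m_S P`: the tensor product `X^1 ⊗ ⋯ ⊗ X^m` in which `X^i = P` for `i ∈ S` and `X^i = I`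
otherwise.  (A subset `S` of `{1,…,m}` of size `m-k` corresponds to the strictly increasing map
`β ∈ Q_{m-k,m}` enumerating it, so this realizes `⊗^m_β P`.) -/
def tensorSel {n m : ℕ} (S : Finset (Fin m)) (P : Op n) : TOp n m :=
  tensorFam fun i => if i ∈ S then P else 1

/-- The pure tensor `v_1 ⊗ ⋯ ⊗ v_m` in the coordinate model of `⊗^m V`. -/
def tensorVec {n m : ℕ} (v : Fin m → Vec n) : TVec n m :=
  (WithLp.equiv 2 ((Fin m → Fin n) → ℂ)).symm fun α => ∏ i, v i (α i)

/-- The decomposable symmetrized tensor `v_1 ∗ ⋯ ∗ v_m = K_χ(v_1 ⊗ ⋯ ⊗ v_m)`,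
as an element of `V_χ`. -/
def estarVec (n m : ℕ) (χ : Equiv.Perm (Fin m) → ℂ) (v : Fin m → Vec n) : symClass n m χ :=
  ⟨Kproj n m χ (tensorVec v), LinearMap.mem_range.mpr ⟨tensorVec v, rfl⟩⟩

namespace Aux

variable {n m : ℕ}

lemma clm_coord {ι : Type*} [Fintype ι] [DecidableEq ι] (A : Matrix ι ι ℂ)
    (x : EuclideanSpace ℂ ι) (a : ι) :
    Matrix.toEuclideanCLM (𝕜 := ℂ) A x a = ∑ b, A a b * x b := by
  have h : Matrix.toEuclideanCLM (𝕜 := ℂ) A x =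
      (WithLp.equiv _ _).symm (Matrix.toLin' A (WithLp.equiv _ _ x)) := rfl
  rw [h]
  show (Matrix.toLin' A (WithLp.equiv _ _ x)) a = _
  rw [Matrix.toLin'_apply]
  simp [Matrix.mulVec, dotProduct]

lemma entry_toEuclideanCLM (A : Matrix (Fin n) (Fin n) ℂ) (a b : Fin n) :
    entry (Matrix.toEuclideanCLM (𝕜 := ℂ) A) a b = A a b := by
  rw [entry, clm_coord]
  simp [EuclideanSpace.single_apply, mul_ite]

/-- coordinates of the action of an operator -/
lemma apply_coord (T : Op n) (x : Vec n) (a : Fin n) :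
    T x a = ∑ b, entry T a b * x b := by
  have hT : T = Matrix.toEuclideanCLM (𝕜 := ℂ) ((Matrix.toEuclideanCLM (𝕜 := ℂ)).symm T) :=
    ((Matrix.toEuclideanCLM (𝕜 := ℂ)).apply_symm_apply T).symm
  conv_lhs => rw [hT, clm_coord]
  refine Finset.sum_congr rfl fun b _ => ?_
  conv_rhs => rw [hT, entry_toEuclideanCLM]

lemma tensorVec_coord (v : Fin m → Vec n) (β : Fin m → Fin n) :
    tensorVec (n := n) v β = ∏ i, v i (β i) := rfl

lemma tensorFam_coord (T : Fin m → Op n) (x : TVec n m) (γ : Fin m → Fin n) :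
    tensorFam T x γ = ∑ β, (∏ i, entry (T i) (γ i) (β i)) * x β := by
  rw [tensorFam, clm_coord]
  rfl

lemma tensorFam_tensorVec (T : Fin m → Op n) (w : Fin m → Vec n) :
    tensorFam T (tensorVec w) = tensorVec (fun i => T i (w i)) := by
  ext γ
  rw [tensorFam_coord, tensorVec_coord]
  calc ∑ β, (∏ i, entry (T i) (γ i) (β i)) * tensorVec w β
      = ∑ β : Fin m → Fin n, ∏ i, (entry (T i) (γ i) (β i) * w i (β i)) := by
        simp [tensorVec_coord, Finset.prod_mul_distrib]
    _ = ∏ i, ∑ b, entry (T i) (γ i) b * w i b := (Fintype.prod_sum (κ := fun _ : Fin m => Fin n)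
        (fun i b => entry (T i) (γ i) b * w i b)).symm
    _ = ∏ i, (T i) (w i) (γ i) := by simp [← apply_coord]

lemma tensorVec_smul (c : Fin m → ℂ) (w : Fin m → Vec n) :
    tensorVec (fun i => c i • w i) = (∏ i, c i) • tensorVec (n := n) w := by
  ext γ
  rw [tensorVec_coord]
  have : ((∏ i, c i) • tensorVec (n := n) w) γ = (∏ i, c i) * tensorVec w γ := rfl
  rw [this, tensorVec_coord, ← Finset.prod_mul_distrib]
  rfl

end Aux
namespace Aux
variable {n m : ℕ}

lemma perm_mul_matrix (σ : Equiv.Perm (Fin m)) (T : Op n) :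
    (Matrix.of fun a b : Fin m → Fin n => if b = a ∘ σ then (1:ℂ) else 0) *
      (Matrix.of fun a b : Fin m → Fin n => ∏ i, entry T (a i) (b i)) =
    (Matrix.of fun a b : Fin m → Fin n => ∏ i, entry T (a i) (b i)) *
      (Matrix.of fun a b : Fin m → Fin n => if b = a ∘ σ then (1:ℂ) else 0) := by
  ext a c
  rw [Matrix.mul_apply, Matrix.mul_apply]
  have hcond : ∀ b : Fin m → Fin n, (c = b ∘ σ) ↔ (b = c ∘ σ.symm) := by
    intro b
    constructor
    · intro h; subst h; funext i; simp
    · intro h; subst h; funext i; simp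
  simp only [Matrix.of_apply, hcond, ite_mul, mul_ite, one_mul, zero_mul, mul_one, mul_zero]
  rw [Finset.sum_ite_eq' Finset.univ (a ∘ σ) (fun b => ∏ i, entry T (b i) (c i)),
    Finset.sum_ite_eq' Finset.univ (c ∘ σ.symm) (fun b => ∏ i, entry T (a i) (b i))]
  simp only [Finset.mem_univ, if_true]
  have hp := Equiv.prod_comp σ (fun i => entry T (a i) (c (σ.symm i)))
  simp only [Function.comp_apply]
  rw [← hp]
  simp

lemma tensorPow_mul_permOp (T : Op n) (σ : Equiv.Perm (Fin m)) :
    (tensorPow n m T) * (permOp n m σ) = permOp n m σ * tensorPow n m T := by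
  have h := map_mul (Matrix.toEuclideanCLM (𝕜 := ℂ))
    (Matrix.of fun a b : Fin m → Fin n => ∏ i, entry T (a i) (b i))
    (Matrix.of fun a b : Fin m → Fin n => if b = a ∘ σ then (1:ℂ) else 0)
  have h2 := map_mul (Matrix.toEuclideanCLM (𝕜 := ℂ))
    (Matrix.of fun a b : Fin m → Fin n => if b = a ∘ σ then (1:ℂ) else 0)
    (Matrix.of fun a b : Fin m → Fin n => ∏ i, entry T (a i) (b i))
  rw [tensorPow, tensorFam, permOp, ← h, ← h2, ← perm_mul_matrix]

lemma tensorPow_apply_permOp (T : Op n) (σ : Equiv.Perm (Fin m)) (v : TVec n m) :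
    tensorPow n m T (permOp n m σ v) = permOp n m σ (tensorPow n m T v) := by
  have h := congrArg (fun A : TOp n m => A v) (tensorPow_mul_permOp T σ)
  simpa [ContinuousLinearMap.mul_apply] using h

lemma tensorPow_apply_Kproj (χ : Equiv.Perm (Fin m) → ℂ) (T : Op n) (v : TVec n m) :
    tensorPow n m T (Kproj n m χ v) = Kproj n m χ (tensorPow n m T v) := by
  simp only [Kproj, ContinuousLinearMap.smul_apply, ContinuousLinearMap.sum_apply, map_smul,
    map_sum, tensorPow_apply_permOp]

end Aux
namespace Aux
variable {n m : ℕ}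

def entryLM (a b : Fin n) : Op n →ₗ[ℂ] ℂ where
  toFun T := entry T a b
  map_add' S T := by simp [entry]
  map_smul' c T := by simp [entry]

def matFamML (n m : ℕ) :
    MultilinearMap ℂ (fun _ : Fin m => Op n) ((Fin m → Fin n) → (Fin m → Fin n) → ℂ) :=
  MultilinearMap.pi fun a => MultilinearMap.pi fun b =>
    (MultilinearMap.mkPiAlgebra ℂ (Fin m) ℂ).compLinearMap fun i => entryLM (a i) (b i)

def toCLM' (n m : ℕ) : ((Fin m → Fin n) → (Fin m → Fin n) → ℂ) →ₗ[ℂ] TOp n m where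
  toFun f := Matrix.toEuclideanCLM (𝕜 := ℂ) (Matrix.of f)
  map_add' f g := map_add (Matrix.toEuclideanCLM (𝕜 := ℂ)) (Matrix.of f) (Matrix.of g)
  map_smul' c f := map_smul (Matrix.toEuclideanCLM (𝕜 := ℂ)) c (Matrix.of f)

def tensorFamCM (n m : ℕ) : ContinuousMultilinearMap ℂ (fun _ : Fin m => Op n) (TOp n m) where
  toMultilinearMap := (toCLM' n m).compMultilinearMap (matFamML n m)
  cont := by
    show Continuous fun T => toCLM' n m (matFamML n m T)
    refine ((toCLM' n m).continuous_of_finiteDimensional).comp ?_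
    refine continuous_pi fun a => continuous_pi fun b => ?_
    show Continuous fun T : Fin m → Op n => ∏ i, entryLM (a i) (b i) (T i)
    exact continuous_finset_prod _ fun i _ =>
      ((entryLM (a i) (b i)).continuous_of_finiteDimensional).comp (continuous_apply i)

lemma tensorFamCM_apply (T : Fin m → Op n) : tensorFamCM n m T = tensorFam T := rfl

end Aux
namespace Aux
variable {n m : ℕ}

def diagCLM (n m : ℕ) : Op n →L[ℂ] (Fin m → Op n) :=
  ContinuousLinearMap.pi fun _ => ContinuousLinearMap.id ℂ (Op n)

def L2 (n m : ℕ) (χ : Equiv.Perm (Fin m) → ℂ) :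
    TOp n m →ₗ[ℂ] (symClass n m χ →L[ℂ] symClass n m χ) where
  toFun B := (Submodule.orthogonalProjectionOnto (symClass n m χ)).comp (B.comp (symClass n m χ).subtypeL)
  map_add' B C := by ext x; simp
  map_smul' c B := by ext x; simp

lemma Kmap_eq (χ : Equiv.Perm (Fin m) → ℂ) :
    Kmap n m χ = ⇑(LinearMap.toContinuousLinearMap (L2 n m χ)) ∘ ⇑(tensorFamCM n m) ∘
      ⇑(diagCLM n m) := rfl

lemma contDiff_Kmap (χ : Equiv.Perm (Fin m) → ℂ) : ContDiff ℂ ⊤ (Kmap n m χ) := by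
  rw [Kmap_eq]
  have h1 : ContDiff ℂ ⊤ ⇑(LinearMap.toContinuousLinearMap (L2 n m χ)) := by
    have := ContinuousLinearMap.contDiff (𝕜 := ℂ) (n := ⊤) (E := TOp n m)
      (F := symClass n m χ →L[ℂ] symClass n m χ) (LinearMap.toContinuousLinearMap (L2 n m χ))
    exact this
  have h2 : ContDiff ℂ ⊤ ⇑(tensorFamCM n m) := (tensorFamCM n m).contDiff
  have h3 : ContDiff ℂ ⊤ ⇑(diagCLM n m) := (diagCLM n m).contDiff
  exact h1.comp (h2.comp h3)

def Mfun (n m : ℕ) (χ : Equiv.Perm (Fin m) → ℂ) (v : TVec n m) :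
    ContinuousMultilinearMap ℂ (fun _ : Fin m => Op n) (TVec n m) :=
  ((Kproj n m χ).comp (ContinuousLinearMap.apply ℂ (TVec n m) v)).compContinuousMultilinearMap
    (tensorFamCM n m)

lemma Mfun_apply (χ : Equiv.Perm (Fin m) → ℂ) (v : TVec n m) (T : Fin m → Op n) :
    Mfun n m χ v T = Kproj n m χ (tensorFam T v) := rfl

def phi (n m : ℕ) (χ : Equiv.Perm (Fin m) → ℂ) (x : symClass n m χ) :
    (symClass n m χ →L[ℂ] symClass n m χ) →L[ℂ] TVec n m :=
  (symClass n m χ).subtypeL.comp (ContinuousLinearMap.apply ℂ (symClass n m χ) x)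

lemma phi_apply (χ : Equiv.Perm (Fin m) → ℂ) (x : symClass n m χ)
    (A : symClass n m χ →L[ℂ] symClass n m χ) : phi n m χ x A = (A x : TVec n m) := rfl

lemma coe_Kmap_apply (χ : Equiv.Perm (Fin m) → ℂ) (T : Op n) (x : symClass n m χ)
    (v : TVec n m) (hv : (x : TVec n m) = Kproj n m χ v) :
    ((Kmap n m χ T x : symClass n m χ) : TVec n m) = Kproj n m χ (tensorPow n m T v) := by
  have hmem : Kproj n m χ (tensorPow n m T v) ∈ symClass n m χ :=
    LinearMap.mem_range.mpr ⟨_, rfl⟩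
  show (Submodule.orthogonalProjectionOnto (symClass n m χ)
      (tensorPow n m T ((symClass n m χ).subtypeL x)) : TVec n m) = _
  rw [Submodule.subtypeL_apply, hv, tensorPow_apply_Kproj]
  exact congrArg _ (Submodule.orthogonalProjectionOnto_mem_subspace_eq_self
    (⟨_, hmem⟩ : symClass n m χ))

lemma phi_comp_Kmap (χ : Equiv.Perm (Fin m) → ℂ) (v : TVec n m)
    (hmem : Kproj n m χ v ∈ symClass n m χ) :
    ⇑(Aux.phi n m χ ⟨Kproj n m χ v, hmem⟩) ∘ (Kmap n m χ) =
      ⇑(Aux.Mfun n m χ v) ∘ ⇑(diagCLM n m) := by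
  funext T
  show ((Kmap n m χ T ⟨Kproj n m χ v, hmem⟩ : symClass n m χ) : TVec n m) =
    Kproj n m χ (tensorFam (fun _ => T) v)
  exact coe_Kmap_apply χ T _ v rfl

end Aux
namespace Aux

lemma image_embed (k m : ℕ) :
    (Finset.univ.image fun e : Fin k ↪ Fin m => Finset.map e Finset.univ) =
      Finset.powersetCard k Finset.univ := by
  ext S
  simp only [Finset.mem_image, Finset.mem_univ, true_and, Finset.mem_powersetCard_univ]
  constructor
  · rintro ⟨e, rfl⟩; simp [Finset.card_map]
  · intro hS
    refine ⟨(S.orderIsoOfFin hS).toEquiv.toEmbedding.trans (Function.Embedding.subtype _), ?_⟩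
    ext x
    simp only [Finset.mem_map, Finset.mem_univ, true_and, Function.Embedding.trans_apply,
      Equiv.coe_toEmbedding, Function.Embedding.coe_subtype]
    constructor
    · rintro ⟨i, rfl⟩; exact ((S.orderIsoOfFin hS) i).2
    · intro hx; exact ⟨(S.orderIsoOfFin hS).symm ⟨x, hx⟩, by simp⟩

def fiberEquiv (k m : ℕ) (S : Finset (Fin m)) (hS : S.card = k) :
    {e : Fin k ↪ Fin m // Finset.map e Finset.univ = S} ≃ (Fin k ↪ {x // x ∈ S}) where
  toFun p := ⟨fun i => ⟨p.1 i, by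
      have h := Finset.mem_map_of_mem p.1 (Finset.mem_univ i)
      rwa [p.2] at h⟩,
    fun i j h => p.1.injective (congrArg Subtype.val h)⟩
  invFun f := ⟨f.trans (Function.Embedding.subtype _), by
    refine Finset.eq_of_subset_of_card_le ?_ ?_
    · intro x hx
      simp only [Finset.mem_map, Finset.mem_univ, true_and, Function.Embedding.trans_apply,
        Function.Embedding.coe_subtype] at hx
      obtain ⟨i, rfl⟩ := hx
      exact (f i).2
    · rw [Finset.card_map, Finset.card_univ, Fintype.card_fin, hS]⟩
  left_inv p := by apply Subtype.ext; ext i; rfl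
  right_inv f := by ext i; rfl

lemma fiber_card (k m : ℕ) (S : Finset (Fin m)) (hS : S.card = k) :
    (Finset.univ.filter fun e : Fin k ↪ Fin m => Finset.map e Finset.univ = S).card =
      k.factorial := by
  classical
  rw [← Fintype.card_subtype]
  rw [Fintype.card_congr (fiberEquiv k m S hS), Fintype.card_embedding_eq, Fintype.card_coe,
    hS, Fintype.card_fin, Nat.descFactorial_self]

end Aux

/-- if `P` is positive semidefinite with orthonormal eigenbasis `e_1, …, e_n` and
eigenvalues `ν_1 ≥ ⋯ ≥ ν_n`, then for every `α ∈ Γ_{m,n}`,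
`D^k K_χ(P)(I,…,I) e*_α = k! · p_{m−k}(ν_α) · e*_α`; in particular, whenever `e*_α ≠ 0` it is an
eigenvector of `D^k K_χ(P)(I,…,I)` with eigenvalue `λ(α) = k! · p_{m−k}(ν_α)`. -/
theorem kth_deriv_Kmap_eigenvector (n m k : ℕ) (hk1 : 1 ≤ k) (hkm : k ≤ m) (hmn : m ≤ n)
    (χ : Equiv.Perm (Fin m) → ℂ) (hχ : IsIrreducibleCharacter m χ)
    (P : Op n) (hPpos : P.IsPositive)
    (e : OrthonormalBasis (Fin n) ℂ (Vec n)) (ν : Fin n → ℝ) (hν : Antitone ν)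
    (heig : ∀ i, P (e i) = (ν i : ℂ) • e i)
    (α : Fin m → Fin n) :
    iteratedFDeriv ℂ k (Kmap n m χ) P (fun _ => (1 : Op n))
        (estarVec n m χ fun j => e (α j)) =
      ((k.factorial : ℂ) * esymm m (m - k) fun j => (ν (α j) : ℂ)) •
        estarVec n m χ (fun j => e (α j)) := by
  classical
  set w : Fin m → Vec n := fun j => e (α j) with hw
  set v' : TVec n m := tensorVec w with hv'
  have hmem : Kproj n m χ v' ∈ symClass n m χ := LinearMap.mem_range.mpr ⟨v', rfl⟩
  set x : symClass n m χ := estarVec n m χ w with hx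
  apply Subtype.ext
  have hxval : (x : TVec n m) = Kproj n m χ v' := rfl
  -- RHS coercion
  have hRHS : ((((k.factorial : ℂ) * esymm m (m - k) fun j => (ν (α j) : ℂ)) • x :
      symClass n m χ) : TVec n m) =
      ((k.factorial : ℂ) * esymm m (m - k) fun j => (ν (α j) : ℂ)) • Kproj n m χ v' := by
    rw [Submodule.coe_smul, hxval]
  rw [hRHS]
  -- LHS: move coercion inside the derivative
  have hcomp := ContinuousLinearMap.iteratedFDeriv_comp_left (f := Kmap n m χ)
    (Aux.phi n m χ x) ((Aux.contDiff_Kmap χ).contDiffAt (x := P)) (i := k) le_top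
  have h1 : ((iteratedFDeriv ℂ k (Kmap n m χ) P (fun _ => (1 : Op n)) x :
      symClass n m χ) : TVec n m) =
      iteratedFDeriv ℂ k (⇑(Aux.phi n m χ x) ∘ Kmap n m χ) P (fun _ => (1 : Op n)) := by
    rw [hcomp]; rfl
  rw [h1]
  have h2 : ⇑(Aux.phi n m χ x) ∘ Kmap n m χ = ⇑(Aux.Mfun n m χ v') ∘ ⇑(Aux.diagCLM n m) :=
    Aux.phi_comp_Kmap χ v' hmem
  rw [h2]
  have hcomp2 := ContinuousLinearMap.iteratedFDeriv_comp_right (Aux.diagCLM n m)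
    (Aux.Mfun n m χ v').contDiff P (i := k) le_top
  rw [hcomp2]
  rw [ContinuousMultilinearMap.compContinuousLinearMap_apply]
  have hdiag1 : (fun _ : Fin m => Aux.diagCLM n m (1 : Op n)) = fun _ => fun _ => (1 : Op n) :=
    rfl
  have hdiagP : Aux.diagCLM n m P = fun _ => P := rfl
  rw [ContinuousMultilinearMap.iteratedFDeriv_eq]
  have hsum : (Aux.Mfun n m χ v').iteratedFDeriv k (Aux.diagCLM n m P)
      (fun _ => Aux.diagCLM n m (1 : Op n)) =
      ∑ emb : Fin k ↪ Fin m, Aux.Mfun n m χ v'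
        (fun j => if j ∈ Finset.map emb Finset.univ then (1 : Op n) else P) := by
    unfold ContinuousMultilinearMap.iteratedFDeriv
    rw [ContinuousMultilinearMap.sum_apply]
    refine Finset.sum_congr rfl fun emb _ => ?_
    rw [ContinuousMultilinearMap.iteratedFDerivComponent_apply]
    congr 1
    funext j
    by_cases hj : j ∈ Set.range ⇑emb
    · have hj' : j ∈ Finset.map emb Finset.univ := by
        simpa [Finset.mem_map] using hj
      simp [hj, hj', Aux.diagCLM]
    · have hj' : j ∉ Finset.map emb Finset.univ := by
        simpa [Finset.mem_map] using hj
      simp [hj, hj', Aux.diagCLM]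
  rw [hsum]
  have hFS : ∀ S : Finset (Fin m), S ∈ Finset.powersetCard k Finset.univ →
      Aux.Mfun n m χ v' (fun j => if j ∈ S then (1 : Op n) else P) =
      (∏ i ∈ Sᶜ, (ν (α i) : ℂ)) • Kproj n m χ v' := by
    intro S _
    rw [Aux.Mfun_apply, hv', Aux.tensorFam_tensorVec]
    have happ : (fun i => (if i ∈ S then (1:Op n) else P) (w i)) =
        fun i => (if i ∈ S then (1:ℂ) else (ν (α i) : ℂ)) • w i := by
      funext i
      by_cases hi : i ∈ S
      · simp [hi]
      · simp [hi, hw, heig]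
    rw [happ, Aux.tensorVec_smul, map_smul]
    congr 1
    have hite : ∀ i : Fin m, (if i ∈ S then (1:ℂ) else (ν (α i):ℂ)) =
        (if i ∈ Sᶜ then (ν (α i):ℂ) else 1) := by
      intro i; by_cases hi : i ∈ S <;> simp [hi]
    rw [Finset.prod_congr rfl fun i _ => hite i, Finset.prod_ite_mem, Finset.univ_inter]
  rw [Finset.sum_comp (fun S => Aux.Mfun n m χ v' (fun j => if j ∈ S then (1 : Op n) else P))
    (fun emb : Fin k ↪ Fin m => Finset.map emb Finset.univ)]
  rw [Aux.image_embed]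
  rw [Finset.sum_congr rfl (fun S hS => by
    rw [Aux.fiber_card k m S (Finset.mem_powersetCard_univ.mp hS), hFS S hS])]
  have hns : ∀ S ∈ Finset.powersetCard k (Finset.univ : Finset (Fin m)),
      k.factorial • ((∏ i ∈ Sᶜ, (ν (α i) : ℂ)) • Kproj n m χ v') =
      ((k.factorial : ℂ) * ∏ i ∈ Sᶜ, (ν (α i) : ℂ)) • Kproj n m χ v' := by
    intro S _
    rw [← Nat.cast_smul_eq_nsmul ℂ, smul_smul]
  rw [Finset.sum_congr rfl hns, ← Finset.sum_smul]
  congr 1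
  rw [← Finset.mul_sum]
  congr 1
  rw [esymm]
  refine Finset.sum_bij' (i := fun S _ => Sᶜ) (j := fun S _ => Sᶜ) ?_ ?_ ?_ ?_ ?_
  · intro S hS
    rw [Finset.mem_powersetCard_univ, Finset.card_compl, Fintype.card_fin,
      Finset.mem_powersetCard_univ.mp hS]
  · intro S hS
    rw [Finset.mem_powersetCard_univ, Finset.card_compl, Fintype.card_fin,
      Finset.mem_powersetCard_univ.mp hS, Nat.sub_sub_self hkm]
  · intro S _; exact compl_compl S
  · intro S _; exact compl_compl S
  · intro S _; rfl

end
end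

section
/- Let A ∈ M_n(ℂ) and let 1 ≤ k ≤ n. Then the k-th derivative of the permanent satisfies ‖D^k per(A)‖ ≤ (n!/(n−k)!) · ‖A‖^{n−k}. -/
set_option synthInstance.maxHeartbeats 1000000
set_option maxHeartbeats 1000000

noncomputable section

open scoped Matrix.Norms.L2Operator

/-- The immanant `d_χ(A) = ∑_{σ ∈ S_n} χ(σ) ∏_i a_{iσ(i)}` of a complex `n × n` matrix. -/
def immanant {n : ℕ} (χ : Equiv.Perm (Fin n) → ℂ) (A : Matrix (Fin n) (Fin n) ℂ) : ℂ :=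
  ∑ σ : Equiv.Perm (Fin n), χ σ * ∏ i, A i (σ i)

/-- The matrix `A` has singular values `ν 0 ≥ ν 1 ≥ ⋯ ≥ ν (n-1)`. -/
def MatrixHasSingularValues {n : ℕ} (A : Matrix (Fin n) (Fin n) ℂ) (ν : Fin n → ℝ) : Prop :=
  HasSingularValues (Matrix.toEuclideanCLM (𝕜 := ℂ) A) ν

namespace PermAux

variable {n : ℕ}

/-- Kronecker-type product matrix of a family of `n × n` matrices. -/
def kron (C : Fin n → Matrix (Fin n) (Fin n) ℂ) :
    Matrix (Fin n → Fin n) (Fin n → Fin n) ℂ :=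
  Matrix.of fun α β => ∏ i, C i (α i) (β i)

lemma kron_mul (C D : Fin n → Matrix (Fin n) (Fin n) ℂ) :
    kron C * kron D = kron fun i => C i * D i := by
  ext α β
  simp only [kron, Matrix.mul_apply, Matrix.of_apply, ← Finset.prod_mul_distrib]
  rw [← Fintype.prod_sum fun i c => C i (α i) c * D i c (β i)]

lemma kron_one : kron (fun _ : Fin n => (1 : Matrix (Fin n) (Fin n) ℂ)) = 1 := by
  ext α β
  simp only [kron, Matrix.of_apply, Matrix.one_apply]
  rw [Finset.prod_boole]
  simp [funext_iff]

lemma euclid_norm_sq {m : Type*} [Fintype m] (x : EuclideanSpace ℂ m) :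
    ‖x‖ ^ 2 = ∑ i, ‖x i‖ ^ 2 := by
  rw [EuclideanSpace.norm_eq, Real.sq_sqrt]
  positivity

lemma toEuclideanCLM_apply_coord {m : Type*} [Fintype m] [DecidableEq m]
    (M : Matrix m m ℂ) (x : EuclideanSpace ℂ m) (a : m) :
    (Matrix.toEuclideanCLM (𝕜 := ℂ) M x) a = ∑ b, M a b * x b := by
  have h := Matrix.ofLp_toEuclideanCLM (𝕜 := ℂ) M x
  have h2 := congrFun h a
  simpa [Matrix.toLin'_apply, Matrix.mulVec, dotProduct] using h2

lemma kron_single_apply (i₀ : Fin n) (C : Matrix (Fin n) (Fin n) ℂ)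
    (α : Fin n → Fin n) (b : Fin n) (s : {j : Fin n // j ≠ i₀} → Fin n) :
    kron (fun i => if i = i₀ then C else 1) α ((Equiv.funSplitAt i₀ (Fin n)).symm (b, s))
      = C (α i₀) b * (if (fun j : {j : Fin n // j ≠ i₀} => α j) = s then 1 else 0) := by
  classical
  simp only [kron, Matrix.of_apply]
  rw [← Finset.prod_erase_mul (a := i₀) _ _ (Finset.mem_univ i₀)]
  have h1 : (if i₀ = i₀ then C else 1) (α i₀)
      (((Equiv.funSplitAt i₀ (Fin n)).symm (b, s)) i₀) = C (α i₀) b := by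
    simp [Equiv.funSplitAt_symm_apply]
  rw [h1, mul_comm]
  congr 1
  rw [Finset.prod_subtype (p := fun j => j ≠ i₀) (Finset.univ.erase i₀)
      (fun j => by simp [Finset.mem_erase] : ∀ j, j ∈ Finset.univ.erase i₀ ↔ j ≠ i₀)
      (fun j => (if j = i₀ then C else 1) (α j) (((Equiv.funSplitAt i₀ (Fin n)).symm (b, s)) j))]
  have h2 : ∀ j : {j : Fin n // j ≠ i₀},
      (if (j : Fin n) = i₀ then C else 1) (α j) (((Equiv.funSplitAt i₀ (Fin n)).symm (b, s)) j)
        = if α j = s j then 1 else 0 := by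
    intro j
    simp [Equiv.funSplitAt_symm_apply, j.2, Matrix.one_apply]
  rw [Finset.prod_congr rfl fun j _ => h2 j, Finset.prod_boole]
  · simp [funext_iff]
  all_goals infer_instance

lemma mulVec_kron_single (i₀ : Fin n) (C : Matrix (Fin n) (Fin n) ℂ)
    (v : (Fin n → Fin n) → ℂ) (α : Fin n → Fin n) :
    ∑ β, kron (fun i => if i = i₀ then C else 1) α β * v β
      = ∑ b, C (α i₀) b *
          v ((Equiv.funSplitAt i₀ (Fin n)).symm (b, fun j => α j)) := by
  classical
  rw [← Equiv.sum_comp (Equiv.funSplitAt i₀ (Fin n)).symm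
      (fun β => kron (fun i => if i = i₀ then C else 1) α β * v β), Fintype.sum_prod_type]
  congr 1 with b
  calc ∑ s, kron (fun i => if i = i₀ then C else 1) α
          ((Equiv.funSplitAt i₀ (Fin n)).symm (b, s)) *
          v ((Equiv.funSplitAt i₀ (Fin n)).symm (b, s))
      = ∑ s, (if (fun j : {j : Fin n // j ≠ i₀} => α j) = s then
          C (α i₀) b * v ((Equiv.funSplitAt i₀ (Fin n)).symm (b, s)) else 0) := by
        refine Finset.sum_congr rfl fun s _ => ?_
        rw [kron_single_apply]
        by_cases h : (fun j : {j : Fin n // j ≠ i₀} => α j) = s <;> simp [h]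
    _ = C (α i₀) b * v ((Equiv.funSplitAt i₀ (Fin n)).symm (b, fun j => α j)) := by
        rw [Finset.sum_ite_eq]
        simp

lemma norm_kron_single (i₀ : Fin n) (C : Matrix (Fin n) (Fin n) ℂ) :
    ‖kron (fun i => if i = i₀ then C else 1)‖ ≤ ‖C‖ := by
  set M := kron (fun i => if i = i₀ then C else 1) with hM
  rw [← Matrix.l2_opNorm_toEuclideanCLM]
  refine ContinuousLinearMap.opNorm_le_bound _ (norm_nonneg C) fun x => ?_
  set e := Equiv.funSplitAt i₀ (Fin n) with he
  set T := Matrix.toEuclideanCLM (𝕜 := ℂ) M with hT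
  set y : ({j : Fin n // j ≠ i₀} → Fin n) → EuclideanSpace ℂ (Fin n) :=
    fun r => (WithLp.equiv 2 (Fin n → ℂ)).symm (fun b => x (e.symm (b, r))) with hy
  set z : ({j : Fin n // j ≠ i₀} → Fin n) → EuclideanSpace ℂ (Fin n) :=
    fun r => (EuclideanSpace.equiv (Fin n) ℂ).symm (Matrix.mulVec C (y r)) with hz
  have hcoord : ∀ a r, (T x) (e.symm (a, r)) = z r a := by
    intro a r
    rw [toEuclideanCLM_apply_coord]
    have h1 : (e.symm (a, r)) i₀ = a := by simp [he, Equiv.funSplitAt_symm_apply]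
    have h2 : (fun j : {j : Fin n // j ≠ i₀} => (e.symm (a, r)) j) = r := by
      funext j
      simp [he, Equiv.funSplitAt_symm_apply, j.2]
    calc ∑ β, M (e.symm (a, r)) β * x β
        = ∑ b, C ((e.symm (a, r)) i₀) b *
            x (e.symm (b, fun j => (e.symm (a, r)) j)) := mulVec_kron_single i₀ C x _
      _ = ∑ b, C a b * x (e.symm (b, r)) := by rw [h1, h2]
      _ = z r a := by
          simp [hz, hy, Matrix.mulVec, dotProduct]
  have key : ‖T x‖ ^ 2 ≤ (‖C‖ * ‖x‖) ^ 2 := by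
    rw [euclid_norm_sq]
    calc ∑ α, ‖(T x) α‖ ^ 2
        = ∑ p : Fin n × ({j : Fin n // j ≠ i₀} → Fin n), ‖(T x) (e.symm p)‖ ^ 2 :=
          (Equiv.sum_comp e.symm _).symm
      _ = ∑ r, ∑ a, ‖(T x) (e.symm (a, r))‖ ^ 2 := by
          rw [Fintype.sum_prod_type]; exact Finset.sum_comm
      _ = ∑ r, ∑ a, ‖z r a‖ ^ 2 := by
          refine Finset.sum_congr rfl fun r _ => Finset.sum_congr rfl fun a _ => ?_
          rw [hcoord a r]
      _ = ∑ r, ‖z r‖ ^ 2 := by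
          refine Finset.sum_congr rfl fun r _ => ?_
          rw [euclid_norm_sq]
      _ ≤ ∑ r, (‖C‖ * ‖y r‖) ^ 2 := by
          refine Finset.sum_le_sum fun r _ => ?_
          have := Matrix.l2_opNorm_mulVec C (y r)
          exact pow_le_pow_left₀ (norm_nonneg _) this 2
      _ = ‖C‖ ^ 2 * ∑ r, ‖y r‖ ^ 2 := by
          rw [Finset.mul_sum]; refine Finset.sum_congr rfl fun r _ => ?_; ring
      _ = ‖C‖ ^ 2 * ∑ r, ∑ b, ‖x (e.symm (b, r))‖ ^ 2 := by
          congr 1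
          exact Finset.sum_congr rfl fun r _ => by rw [euclid_norm_sq]; rfl
      _ = ‖C‖ ^ 2 * ∑ α, ‖x α‖ ^ 2 := by
          congr 1
          rw [← Equiv.sum_comp e.symm (fun α => ‖x α‖ ^ 2), Fintype.sum_prod_type]
          exact Finset.sum_comm
      _ = (‖C‖ * ‖x‖) ^ 2 := by rw [← euclid_norm_sq]; ring
  have h0 : (0:ℝ) ≤ ‖C‖ * ‖x‖ := by positivity
  nlinarith [norm_nonneg (T x)]

lemma norm_kron_le (C : Fin n → Matrix (Fin n) (Fin n) ℂ) :
    ‖kron C‖ ≤ ∏ i, ‖C i‖ := by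
  have haux : ∀ s : Finset (Fin n),
      ‖kron (fun i => if i ∈ s then C i else 1)‖ ≤ ∏ i ∈ s, ‖C i‖ := by
    intro s
    induction s using Finset.induction_on with
    | empty =>
        simp only [Finset.notMem_empty, if_false, Finset.prod_empty, kron_one]
        rw [← Matrix.l2_opNorm_toEuclideanCLM, map_one]
        exact ContinuousLinearMap.norm_id_le
    | @insert a s ha ih =>
        have hfam : (fun i => if i ∈ insert a s then C i else 1)
            = fun i => (if i = a then C a else 1) * (if i ∈ s then C i else 1) := by
          funext i
          by_cases h1 : i = a
          · subst h1
            simp [ha]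
          · by_cases h2 : i ∈ s <;> simp [h1, h2]
        rw [hfam, ← kron_mul, Finset.prod_insert ha]
        calc ‖kron (fun i => if i = a then C a else 1) * kron (fun i => if i ∈ s then C i else 1)‖
            ≤ ‖kron (fun i => if i = a then C a else 1)‖ *
              ‖kron (fun i => if i ∈ s then C i else 1)‖ := Matrix.l2_opNorm_mul _ _
          _ ≤ ‖C a‖ * ∏ i ∈ s, ‖C i‖ :=
              mul_le_mul (norm_kron_single a (C a)) ih (norm_nonneg _) (norm_nonneg _)
  have := haux Finset.univ
  simpa using this

lemma pairing_bound (C : Fin n → Matrix (Fin n) (Fin n) ℂ) :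
    ‖∑ p : Equiv.Perm (Fin n) × Equiv.Perm (Fin n), ∏ i, C i (p.1 i) (p.2 i)‖
      ≤ (n.factorial : ℝ) * ∏ i, ‖C i‖ := by
  classical
  set T := Matrix.toEuclideanCLM (𝕜 := ℂ) (kron C) with hT
  set u : EuclideanSpace ℂ (Fin n → Fin n) :=
    ∑ σ : Equiv.Perm (Fin n), EuclideanSpace.single (⇑σ) (1:ℂ) with hu
  have h1 : ∀ σ τ : Equiv.Perm (Fin n),
      (T (EuclideanSpace.single (⇑σ) (1:ℂ))) ⇑τ = ∏ i, C i (τ i) (σ i) := by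
    intro σ τ
    rw [toEuclideanCLM_apply_coord]
    have hb : ∀ β, kron C ⇑τ β * (EuclideanSpace.single (⇑σ) (1:ℂ)) β
        = if β = ⇑σ then kron C ⇑τ β else 0 := by
      intro β
      rw [EuclideanSpace.single_apply]
      by_cases h : β = ⇑σ <;> simp [h]
    rw [Finset.sum_congr rfl fun β _ => hb β, Finset.sum_ite_eq' Finset.univ (⇑σ)]
    simp [kron]
  have hsingle : ∀ (τ : Equiv.Perm (Fin n)) (w : EuclideanSpace ℂ (Fin n → Fin n)),
      (inner ℂ (EuclideanSpace.single (⇑τ) (1:ℂ)) w : ℂ) = w ⇑τ := by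
    intro τ w
    rw [EuclideanSpace.inner_single_left]
    simp
  have h2 : (inner ℂ u (T u) : ℂ)
      = ∑ p : Equiv.Perm (Fin n) × Equiv.Perm (Fin n), ∏ i, C i (p.1 i) (p.2 i) := by
    rw [Fintype.sum_prod_type]
    calc (inner ℂ u (T u) : ℂ)
        = ∑ σ : Equiv.Perm (Fin n), ∑ τ : Equiv.Perm (Fin n),
            (inner ℂ (EuclideanSpace.single (⇑τ) (1:ℂ))
            (T (EuclideanSpace.single (⇑σ) (1:ℂ))) : ℂ) := by
          rw [hu, map_sum, inner_sum]
          exact Finset.sum_congr rfl fun σ _ => sum_inner _ _ _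
      _ = ∑ σ : Equiv.Perm (Fin n), ∑ τ : Equiv.Perm (Fin n), ∏ i, C i (τ i) (σ i) := by
          refine Finset.sum_congr rfl fun σ _ => Finset.sum_congr rfl fun τ _ => ?_
          rw [hsingle, h1]
      _ = ∑ τ : Equiv.Perm (Fin n), ∑ σ : Equiv.Perm (Fin n), ∏ i, C i (τ i) (σ i) :=
          Finset.sum_comm
  have h3 : (inner ℂ u u : ℂ) = (n.factorial : ℂ) := by
    rw [hu, inner_sum]
    have hσ : ∀ σ : Equiv.Perm (Fin n),
        (inner ℂ (∑ τ : Equiv.Perm (Fin n), EuclideanSpace.single (⇑τ) (1:ℂ))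
          (EuclideanSpace.single (⇑σ) (1:ℂ)) : ℂ) = 1 := by
      intro σ
      rw [sum_inner]
      have he : ∀ τ : Equiv.Perm (Fin n),
          (inner ℂ (EuclideanSpace.single (⇑τ) (1:ℂ))
            (EuclideanSpace.single (⇑σ) (1:ℂ)) : ℂ) = if τ = σ then 1 else 0 := by
        intro τ
        rw [hsingle, EuclideanSpace.single_apply]
        by_cases h : τ = σ
        · simp [h]
        · have hne : ⇑τ ≠ ⇑σ := fun hc => h (Equiv.coe_fn_injective hc)
          simp [h, hne]
      rw [Finset.sum_congr rfl fun τ _ => he τ, Finset.sum_ite_eq' Finset.univ σ]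
      simp
    rw [Finset.sum_congr rfl fun σ _ => hσ σ, Finset.sum_const, Finset.card_univ]
    simp [Fintype.card_perm]
  have h4 : ‖u‖ ^ 2 = (n.factorial : ℝ) := by
    have := inner_self_eq_norm_sq (𝕜 := ℂ) u
    rw [← this, h3]
    simp
  calc ‖∑ p : Equiv.Perm (Fin n) × Equiv.Perm (Fin n), ∏ i, C i (p.1 i) (p.2 i)‖
      = ‖(inner ℂ u (T u) : ℂ)‖ := by rw [h2]
    _ ≤ ‖u‖ * ‖T u‖ := norm_inner_le_norm _ _
    _ ≤ ‖u‖ * (‖T‖ * ‖u‖) :=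
        mul_le_mul_of_nonneg_left (T.le_opNorm u) (norm_nonneg u)
    _ = ‖T‖ * ‖u‖ ^ 2 := by ring
    _ = ‖kron C‖ * (n.factorial : ℝ) := by rw [h4]; rfl
    _ ≤ (n.factorial : ℝ) * ∏ i, ‖C i‖ := by
        rw [mul_comm]
        exact mul_le_mul_of_nonneg_left (norm_kron_le C) (by positivity)

def entryL (a b : Fin n) : Matrix (Fin n) (Fin n) ℂ →ₗ[ℂ] ℂ where
  toFun M := M a b
  map_add' _ _ := rfl
  map_smul' _ _ := rfl

def rawF (n : ℕ) : MultilinearMap ℂ (fun _ : Fin n => Matrix (Fin n) (Fin n) ℂ) ℂ :=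
  (((n.factorial : ℂ))⁻¹) • ∑ p : Equiv.Perm (Fin n) × Equiv.Perm (Fin n),
    (MultilinearMap.mkPiAlgebra ℂ (Fin n) ℂ).compLinearMap fun i => entryL (p.1 i) (p.2 i)

lemma rawF_apply (C : Fin n → Matrix (Fin n) (Fin n) ℂ) :
    rawF n C = (n.factorial : ℂ)⁻¹ *
      ∑ p : Equiv.Perm (Fin n) × Equiv.Perm (Fin n), ∏ i, C i (p.1 i) (p.2 i) := by
  simp [rawF, entryL, MultilinearMap.sum_apply, smul_eq_mul]
  exact Or.inl rfl

lemma rawF_bound (C : Fin n → Matrix (Fin n) (Fin n) ℂ) :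
    ‖rawF n C‖ ≤ 1 * ∏ i, ‖C i‖ := by
  rw [rawF_apply, one_mul, norm_mul]
  have h1 : ‖((n.factorial : ℂ))⁻¹‖ = ((n.factorial : ℝ))⁻¹ := by
    rw [norm_inv]
    norm_num
  rw [h1]
  have h2 := pairing_bound C
  calc ((n.factorial : ℝ))⁻¹ *
      ‖∑ p : Equiv.Perm (Fin n) × Equiv.Perm (Fin n), ∏ i, C i (p.1 i) (p.2 i)‖
      ≤ ((n.factorial : ℝ))⁻¹ * ((n.factorial : ℝ) * ∏ i, ‖C i‖) :=
        mul_le_mul_of_nonneg_left h2 (by positivity)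
    _ = ∏ i, ‖C i‖ := by
        field_simp

/-- The symmetrized multilinear map whose diagonal restriction is the permanent. -/
def Fcm (n : ℕ) : ContinuousMultilinearMap ℂ (fun _ : Fin n => Matrix (Fin n) (Fin n) ℂ) ℂ :=
  (rawF n).mkContinuous 1 rawF_bound

lemma Fcm_norm_le : ‖Fcm n‖ ≤ 1 :=
  (rawF n).mkContinuous_norm_le zero_le_one rawF_bound

lemma Fcm_diag (A : Matrix (Fin n) (Fin n) ℂ) :
    Fcm n (fun _ => A) = ∑ σ : Equiv.Perm (Fin n), ∏ i, A i (σ i) := by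
  have hF : Fcm n (fun _ => A) = rawF n (fun _ => A) := rfl
  rw [hF, rawF_apply, Fintype.sum_prod_type]
  have key : ∀ τ : Equiv.Perm (Fin n),
      ∑ σ : Equiv.Perm (Fin n), ∏ i, A (τ i) (σ i)
        = ∑ σ : Equiv.Perm (Fin n), ∏ j, A j (σ j) := by
    intro τ
    have h1 : ∀ σ : Equiv.Perm (Fin n),
        ∏ i, A (τ i) (σ i) = ∏ j, A j ((σ * τ⁻¹) j) := by
      intro σ
      rw [← Equiv.prod_comp τ (fun j => A j ((σ * τ⁻¹) j))]
      refine Finset.prod_congr rfl fun i _ => ?_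
      simp [Equiv.Perm.mul_apply]
    rw [Finset.sum_congr rfl fun σ _ => h1 σ]
    exact Equiv.sum_comp (Equiv.mulRight τ⁻¹) (fun π => ∏ j, A j (π j))
  rw [Finset.sum_congr rfl fun τ _ => key τ, Finset.sum_const, Finset.card_univ,
    Fintype.card_perm, Fintype.card_fin, nsmul_eq_mul, ← mul_assoc]
  rw [inv_mul_cancel₀ (by exact_mod_cast Nat.factorial_ne_zero n), one_mul]

end PermAux

/-- `‖D^k per(A)‖ ≤ (n!/(n−k)!) ‖A‖^{n−k}` for `1 ≤ k ≤ n`, where the permanent is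
the immanant associated with the trivial character. -/

theorem norm_kth_deriv_permanent_le (n k : ℕ) (hk1 : 1 ≤ k) (hkn : k ≤ n)
    (A : Matrix (Fin n) (Fin n) ℂ) :
    ‖iteratedFDeriv ℂ k (immanant fun _ => (1 : ℂ)) A‖ ≤
      ((n.factorial : ℝ) / ((n - k).factorial : ℝ)) * ‖A‖ ^ (n - k) := by
  classical
  set Δ : Matrix (Fin n) (Fin n) ℂ →L[ℂ] (Fin n → Matrix (Fin n) (Fin n) ℂ) :=
    ContinuousLinearMap.pi (fun _ : Fin n => ContinuousLinearMap.id ℂ _) with hΔ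
  have hΔA : ∀ B : Matrix (Fin n) (Fin n) ℂ, Δ B = fun _ : Fin n => B := fun _ => rfl
  have hfun : (immanant fun _ => (1:ℂ)) = (⇑(PermAux.Fcm n)) ∘ ⇑Δ := by
    funext B
    simp only [Function.comp_apply, immanant, one_mul, hΔA B, PermAux.Fcm_diag]
  rw [hfun, ContinuousLinearMap.iteratedFDeriv_comp_right Δ
    ((PermAux.Fcm n).contDiff) A le_top]
  have hΔnorm : ‖Δ‖ ≤ 1 := by
    refine ContinuousLinearMap.opNorm_le_bound _ zero_le_one fun B => ?_
    rw [one_mul, hΔA B]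
    exact (pi_norm_le_iff_of_nonneg (norm_nonneg B)).mpr fun _ => le_rfl
  have hΔAle : ‖Δ A‖ ≤ ‖A‖ := by
    rw [hΔA A]
    exact (pi_norm_le_iff_of_nonneg (norm_nonneg A)).mpr fun _ => le_rfl
  have hdesc : (n.descFactorial k : ℝ) = (n.factorial : ℝ) / ((n - k).factorial : ℝ) := by
    have h := Nat.factorial_mul_descFactorial hkn
    have h2 : ((n-k).factorial : ℝ) * (n.descFactorial k : ℝ) = (n.factorial : ℝ) := by
      exact_mod_cast congrArg (Nat.cast : ℕ → ℝ) h
    field_simp [Nat.factorial_ne_zero] at h2 ⊢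
    linarith
  calc ‖(iteratedFDeriv ℂ k (⇑(PermAux.Fcm n)) (Δ A)).compContinuousLinearMap fun _ => Δ‖
      ≤ ‖iteratedFDeriv ℂ k (⇑(PermAux.Fcm n)) (Δ A)‖ * ∏ _i : Fin k, ‖Δ‖ :=
        ContinuousMultilinearMap.norm_compContinuousLinearMap_le _ _
    _ ≤ ‖iteratedFDeriv ℂ k (⇑(PermAux.Fcm n)) (Δ A)‖ * 1 := by
        refine mul_le_mul_of_nonneg_left ?_ (norm_nonneg _)
        exact Finset.prod_le_one (fun _ _ => ContinuousLinearMap.opNorm_nonneg _)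
          (fun _ _ => hΔnorm)
    _ = ‖iteratedFDeriv ℂ k (⇑(PermAux.Fcm n)) (Δ A)‖ := mul_one _
    _ ≤ (Nat.descFactorial (Fintype.card (Fin n)) k : ℝ) * ‖PermAux.Fcm n‖ *
          ‖Δ A‖ ^ (Fintype.card (Fin n) - k) :=
        (PermAux.Fcm n).norm_iteratedFDeriv_le k (Δ A)
    _ ≤ (n.descFactorial k : ℝ) * 1 * ‖A‖ ^ (n - k) := by
        rw [Fintype.card_fin]
        gcongr
        exact PermAux.Fcm_norm_le
    _ = ((n.factorial : ℝ) / ((n - k).factorial : ℝ)) * ‖A‖ ^ (n - k) := by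
        rw [mul_one, hdesc]


end
end
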